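/- arXiv:2605.30496 — 6 statements merged into one kernel-verified Lean document; each statement's English description precedes it below -/
import Mathlib

section
/- Let n be a positive integer and y an integer with 0 ≤ y ≤ n. Then the marginal probability mass function of Y, given by p(y) = ∫₀¹ C(n,y) w^y (1-w)^{n-y} (-ln w) dw, equals (n!/y!) · Σ_{k=0}^{n-y} [(-1)^k / (k! (n-y-k)!)] · 1/(y+1+k)². -/
open MeasureTheory intervalIntegral Real

lemma pow_neg_log_intervalIntegrable (m : ℕ) :
    IntervalIntegrable (fun w : ℝ => w ^ m * (-Real.log w)) volume 0 1 := by
  rw [intervalIntegrable_iff_integrableOn_Ioc_of_le zero_le_one]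
  have hg : IntegrableOn (fun w : ℝ => 2 * w ^ (-(1/2) : ℝ)) (Set.Ioc 0 1) volume := by
    have := (intervalIntegral.intervalIntegrable_rpow' (r := -(1/2))
      (by norm_num)).const_mul (2 : ℝ) (a := 0) (b := 1)
    rwa [intervalIntegrable_iff_integrableOn_Ioc_of_le zero_le_one] at this
  refine hg.mono' ?_ ?_
  · exact ((measurable_id.pow_const m).mul Real.measurable_log.neg).aestronglyMeasurable
  · filter_upwards [ae_restrict_mem measurableSet_Ioc] with w hw
    have hw0 : 0 < w := hw.1
    have hw1 : w ≤ 1 := hw.2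
    have hlog : Real.log w ≤ 0 := Real.log_nonpos hw0.le hw1
    have hsq : Real.sqrt w = w ^ ((1:ℝ)/2) := Real.sqrt_eq_rpow w
    have hkey : -Real.log w ≤ 2 * w ^ (-(1/2) : ℝ) := by
      have h1 : Real.log w = 2 * Real.log (Real.sqrt w) := by
        rw [Real.log_sqrt hw0.le]; ring
      have h2 : Real.log (Real.sqrt w)⁻¹ ≤ (Real.sqrt w)⁻¹ - 1 :=
        Real.log_le_sub_one_of_pos (by positivity)
      have h3 : -Real.log (Real.sqrt w) ≤ (Real.sqrt w)⁻¹ := by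
        rw [← Real.log_inv]
        linarith
      have h4 : w ^ (-(1/2) : ℝ) = (Real.sqrt w)⁻¹ := by
        rw [hsq, ← Real.rpow_neg hw0.le]
      rw [h1, h4]; linarith
    have hnorm : ‖w ^ m * (-Real.log w)‖ = w ^ m * (-Real.log w) := by
      rw [Real.norm_eq_abs, abs_of_nonneg]
      have : 0 ≤ -Real.log w := by linarith
      positivity
    rw [hnorm]
    calc w ^ m * (-Real.log w) ≤ 1 * (-Real.log w) := by
          apply mul_le_mul_of_nonneg_right (pow_le_one₀ hw0.le hw1); linarith
      _ ≤ 2 * w ^ (-(1/2) : ℝ) := by rw [one_mul]; exact hkey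

lemma integral_pow_neg_log (m : ℕ) :
    ∫ w in (0:ℝ)..1, w ^ m * (-Real.log w) = 1 / ((m : ℝ) + 1) ^ 2 := by
  set c : ℝ := (m : ℝ) + 1 with hc
  have hc0 : c ≠ 0 := by positivity
  set F : ℝ → ℝ := fun w => w ^ (m + 1) / c ^ 2 - w ^ (m + 1) * Real.log w / c with hF
  have hderiv : ∀ x ∈ Set.Ioo (0:ℝ) 1, HasDerivAt F (x ^ m * (-Real.log x)) x := by
    intro x hx
    have hx0 : x ≠ 0 := ne_of_gt hx.1
    have h1 : HasDerivAt (fun w : ℝ => w ^ (m + 1)) (c * x ^ m) x := by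
      simpa [hc] using hasDerivAt_pow (m + 1) x
    have h2 : HasDerivAt Real.log x⁻¹ x := Real.hasDerivAt_log hx0
    have h3 : HasDerivAt (fun w : ℝ => w ^ (m + 1) * Real.log w)
        (c * x ^ m * Real.log x + x ^ (m + 1) * x⁻¹) x := h1.mul h2
    have h4 := (h1.div_const (c ^ 2)).sub (h3.div_const c)
    refine h4.congr_deriv ?_
    have hxp : x ^ (m + 1) * x⁻¹ = x ^ m := by
      rw [pow_succ]; field_simp
    rw [hxp]
    field_simp
    ring
  have hint := pow_neg_log_intervalIntegrable m
  have ha : Filter.Tendsto F (nhdsWithin 0 (Set.Ioi 0)) (nhds 0) := by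
    have t1 : Filter.Tendsto (fun w : ℝ => w ^ (m + 1) / c ^ 2) (nhdsWithin 0 (Set.Ioi 0)) (nhds 0) := by
      have : Filter.Tendsto (fun w : ℝ => w ^ (m + 1) / c ^ 2) (nhds 0) (nhds (0 ^ (m+1) / c ^ 2)) := by
        exact (continuous_pow (m+1)).continuousAt.div_const _
      simpa using this.mono_left nhdsWithin_le_nhds
    have t2 : Filter.Tendsto (fun w : ℝ => w ^ (m + 1) * Real.log w / c) (nhdsWithin 0 (Set.Ioi 0)) (nhds 0) := by
      have hl : Filter.Tendsto (fun w : ℝ => Real.log w * w ^ (1:ℝ)) (nhdsWithin 0 (Set.Ioi 0)) (nhds 0) :=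
        tendsto_log_mul_rpow_nhdsGT_zero one_pos
      have hp : Filter.Tendsto (fun w : ℝ => w ^ m) (nhdsWithin 0 (Set.Ioi 0)) (nhds (0 ^ m : ℝ)) :=
        ((continuous_pow m).tendsto 0).mono_left nhdsWithin_le_nhds
      have hmul := hl.mul hp
      have heq : ∀ᶠ w in nhdsWithin (0:ℝ) (Set.Ioi 0),
          Real.log w * w ^ (1:ℝ) * w ^ m = w ^ (m + 1) * Real.log w := by
        filter_upwards [self_mem_nhdsWithin] with w hw
        have : w ^ (1:ℝ) = w := Real.rpow_one w
        rw [this, pow_succ]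
        ring
      have := (Filter.Tendsto.congr' heq hmul).div_const c
      simpa using this
    have := t1.sub t2
    simpa using this
  have hb : Filter.Tendsto F (nhdsWithin 1 (Set.Iio 1)) (nhds (1 / c ^ 2)) := by
    have hcont : ContinuousAt F 1 := by
      apply ContinuousAt.sub
      · exact ((continuous_pow (m+1)).continuousAt).div_const _
      · exact (((continuous_pow (m+1)).continuousAt).mul (Real.continuousAt_log one_ne_zero)).div_const _
    have : F 1 = 1 / c ^ 2 := by simp [hF]
    rw [← this]
    exact hcont.continuousWithinAt
  have := intervalIntegral.integral_eq_sub_of_hasDerivAt_of_tendsto zero_lt_one hderiv hint ha hb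
  rw [this]; ring

theorem marginal_pmf_alternating_sum (n y : ℕ) (hn : 0 < n) (hy : y ≤ n) :
    ∫ w in (0:ℝ)..1,
        (n.choose y : ℝ) * w ^ y * (1 - w) ^ (n - y) * (-Real.log w)
      = (Nat.factorial n : ℝ) / (Nat.factorial y : ℝ) *
          ∑ k ∈ Finset.range (n - y + 1),
            (-1 : ℝ) ^ k /
                ((Nat.factorial k : ℝ) * (Nat.factorial (n - y - k) : ℝ)) *
              (1 / ((y : ℝ) + 1 + (k : ℝ)) ^ 2) := by
  set N := n - y with hN
  have hexp : ∀ w : ℝ, (n.choose y : ℝ) * w ^ y * (1 - w) ^ N * (-Real.log w)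
      = ∑ k ∈ Finset.range (N + 1),
          ((n.choose y : ℝ) * (N.choose k : ℝ) * (-1) ^ k) *
            (w ^ (y + k) * (-Real.log w)) := by
    intro w
    have hb : ((-w) + 1) ^ N
        = ∑ k ∈ Finset.range (N + 1), (-w) ^ k * 1 ^ (N - k) * (N.choose k : ℝ) :=
      add_pow (-w) 1 N
    have h1 : (1 - w : ℝ) = -w + 1 := by ring
    rw [h1, hb, Finset.mul_sum, Finset.sum_mul]
    refine Finset.sum_congr rfl fun k _ => ?_
    ring
  calc ∫ w in (0:ℝ)..1, (n.choose y : ℝ) * w ^ y * (1 - w) ^ N * (-Real.log w)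
      = ∑ k ∈ Finset.range (N + 1), ∫ w in (0:ℝ)..1,
          ((n.choose y : ℝ) * (N.choose k : ℝ) * (-1) ^ k) *
            (w ^ (y + k) * (-Real.log w)) := by
        rw [← intervalIntegral.integral_finset_sum]
        · exact intervalIntegral.integral_congr fun w _ => hexp w
        · intro k _
          exact (pow_neg_log_intervalIntegrable (y + k)).const_mul _
    _ = ∑ k ∈ Finset.range (N + 1),
          ((n.choose y : ℝ) * (N.choose k : ℝ) * (-1) ^ k) *
            (1 / ((y : ℝ) + (k : ℝ) + 1) ^ 2) := by
        refine Finset.sum_congr rfl fun k _ => ?_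
        rw [intervalIntegral.integral_const_mul, integral_pow_neg_log]
        push_cast
        ring_nf
    _ = (Nat.factorial n : ℝ) / (Nat.factorial y : ℝ) *
          ∑ k ∈ Finset.range (N + 1),
            (-1 : ℝ) ^ k /
                ((Nat.factorial k : ℝ) * (Nat.factorial (N - k) : ℝ)) *
              (1 / ((y : ℝ) + 1 + (k : ℝ)) ^ 2) := by
        rw [Finset.mul_sum]
        refine Finset.sum_congr rfl fun k hk => ?_
        have hkN : k ≤ N := Nat.lt_succ_iff.mp (Finset.mem_range.mp hk)
        have key : (n.choose y : ℕ) * (N.choose k) * (Nat.factorial y * Nat.factorial k *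
            Nat.factorial (N - k)) = Nat.factorial n := by
          have e1 : N.choose k * Nat.factorial k * Nat.factorial (N - k) = Nat.factorial N :=
            Nat.choose_mul_factorial_mul_factorial hkN
          have e2 : n.choose y * Nat.factorial y * Nat.factorial (n - y) = Nat.factorial n :=
            Nat.choose_mul_factorial_mul_factorial hy
          calc n.choose y * N.choose k * (Nat.factorial y * Nat.factorial k *
                Nat.factorial (N - k))
              = n.choose y * Nat.factorial y * (N.choose k * Nat.factorial k *
                Nat.factorial (N - k)) := by ring
            _ = n.choose y * Nat.factorial y * Nat.factorial N := by rw [e1]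
            _ = Nat.factorial n := by rw [hN]; exact e2
        have keyR : (n.choose y : ℝ) * (N.choose k : ℝ) * ((Nat.factorial y : ℝ) *
            (Nat.factorial k : ℝ) * (Nat.factorial (N - k) : ℝ)) = (Nat.factorial n : ℝ) := by
          exact_mod_cast congrArg (Nat.cast : ℕ → ℝ) key
        have hy0 : (Nat.factorial y : ℝ) ≠ 0 := Nat.cast_ne_zero.mpr (Nat.factorial_ne_zero y)
        have hk0 : (Nat.factorial k : ℝ) ≠ 0 := Nat.cast_ne_zero.mpr (Nat.factorial_ne_zero k)
        have hNk0 : (Nat.factorial (N - k) : ℝ) ≠ 0 :=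
          Nat.cast_ne_zero.mpr (Nat.factorial_ne_zero (N - k))
        have hden : ((y : ℝ) + (k : ℝ) + 1) ≠ 0 := by positivity
        have hden' : ((y : ℝ) + 1 + (k : ℝ)) = ((y : ℝ) + (k : ℝ) + 1) := by ring
        rw [hden']
        field_simp
        linear_combination keyR
end

section
/- Let n be a positive integer and y an integer with 0 ≤ y ≤ n. Then the marginal probability mass function p(y) = ∫₀¹ C(n,y) w^y (1-w)^{n-y} (-ln w) dw equals (H_{n+1} - H_y)/(n+1), where H_m = Σ_{j=1}^m 1/j is the m-th harmonic number (with H₀ = 0). -/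
open MeasureTheory intervalIntegral Real Set

/-- `H m` is the `m`-th harmonic number, with `H 0 = 0`. -/
noncomputable def H (m : ℕ) : ℝ := ∑ j ∈ Finset.range m, 1 / ((j : ℝ) + 1)

lemma H_succ (m : ℕ) : H (m + 1) = H m + 1 / ((m : ℝ) + 1) := by
  simp [H, Finset.sum_range_succ]

lemma neg_log_intervalIntegrable :
    IntervalIntegrable (fun w : ℝ => -Real.log w) volume 0 1 := by
  apply intervalIntegrable_deriv_of_nonneg (g := fun w => w - w * Real.log w)
  · exact (continuous_id.sub Real.continuous_mul_log).continuousOn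
  · intro x hx
    rw [min_eq_left zero_le_one, max_eq_right zero_le_one] at hx
    have hx0 : x ≠ 0 := ne_of_gt hx.1
    have h := (hasDerivAt_id x).sub (Real.hasDerivAt_mul_log hx0)
    refine h.congr_deriv ?_; ring
  · intro x hx
    rw [min_eq_left zero_le_one, max_eq_right zero_le_one] at hx
    have := Real.log_nonpos hx.1.le hx.2.le
    linarith

lemma integrable_aux (a b : ℕ) :
    IntervalIntegrable (fun w : ℝ => w ^ a * (1 - w) ^ b * (-Real.log w)) volume 0 1 := by
  apply neg_log_intervalIntegrable.mono_fun
  · apply Measurable.aestronglyMeasurable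
    exact ((measurable_id.pow_const a).mul
      ((measurable_const.sub measurable_id).pow_const b)).mul Real.measurable_log.neg
  · rw [Filter.EventuallyLE, ae_restrict_iff' measurableSet_uIoc]
    filter_upwards with x hx
    rw [Set.uIoc_of_le zero_le_one] at hx
    have hx0 : 0 ≤ x := hx.1.le
    have hx1 : x ≤ 1 := hx.2
    have h1 : |x ^ a| ≤ 1 := by
      rw [abs_of_nonneg (pow_nonneg hx0 a)]
      exact pow_le_one₀ hx0 hx1
    have h2 : |(1 - x) ^ b| ≤ 1 := by
      rw [abs_of_nonneg (pow_nonneg (by linarith) b)]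
      exact pow_le_one₀ (by linarith) (by linarith)
    simp only [norm_eq_abs, abs_mul]
    calc |x ^ a| * |(1 - x) ^ b| * |(-Real.log x)| ≤ 1 * 1 * |(-Real.log x)| := by
          apply mul_le_mul (mul_le_mul h1 h2 (abs_nonneg _) zero_le_one) le_rfl (abs_nonneg _)
          norm_num
      _ = |(-Real.log x)| := by ring

lemma base_integral (a : ℕ) :
    ∫ w in (0:ℝ)..1, w ^ a * (-Real.log w) = 1 / ((a : ℝ) + 1) ^ 2 := by
  have ha : ((a : ℝ) + 1) ≠ 0 := by positivity
  set F : ℝ → ℝ := fun w => w ^ (a + 1) / ((a : ℝ) + 1) ^ 2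
      - (w ^ a * (w * Real.log w)) / ((a : ℝ) + 1) with hF
  have hcont : ContinuousOn F (Icc 0 1) := by
    apply Continuous.continuousOn
    exact ((continuous_pow (a+1)).div_const _).sub
      (((continuous_pow a).mul Real.continuous_mul_log).div_const _)
  have hderiv : ∀ x ∈ Ioo (0:ℝ) 1, HasDerivWithinAt F (x ^ a * (-Real.log x)) (Ioi x) x := by
    intro x hx
    have hx0 : x ≠ 0 := ne_of_gt hx.1
    have h1 := (hasDerivAt_pow (a + 1) x).div_const (((a : ℝ) + 1) ^ 2)
    have h2 := ((hasDerivAt_pow a x).mul (Real.hasDerivAt_mul_log hx0)).div_const ((a : ℝ) + 1)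
    have h := h1.sub h2
    have hxa : (a : ℝ) * x ^ (a - 1) * x = (a : ℝ) * x ^ a := by
      cases a with
      | zero => simp
      | succ k => rw [Nat.add_sub_cancel, pow_succ]; ring
    have hxa2 : (a : ℝ) * x ^ (a - 1) * (x * Real.log x) = (a : ℝ) * x ^ a * Real.log x := by
      rw [show (a : ℝ) * x ^ (a - 1) * (x * Real.log x)
          = (a : ℝ) * x ^ (a - 1) * x * Real.log x from by ring, hxa]
    refine (h.congr_deriv ?_).hasDerivWithinAt
    rw [Nat.add_sub_cancel, hxa2]
    push_cast
    field_simp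
    ring
  have hint : IntervalIntegrable (fun w : ℝ => w ^ a * (-Real.log w)) volume 0 1 := by
    have := integrable_aux a 0
    simpa using this
  have := integral_eq_sub_of_hasDeriv_right_of_le zero_le_one hcont hderiv hint
  rw [this, hF]
  norm_num

lemma G_formula : ∀ (b a : ℕ),
    ∫ w in (0:ℝ)..1, w ^ a * (1 - w) ^ b * (-Real.log w)
      = ((a.factorial : ℝ) * b.factorial / (a + b + 1).factorial) * (H (a + b + 1) - H a) := by
  intro b
  induction b with
  | zero =>
    intro a
    have ha : ((a : ℝ) + 1) ≠ 0 := by positivity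
    have hfa : ((a.factorial : ℝ)) ≠ 0 := Nat.cast_ne_zero.2 a.factorial_ne_zero
    have h1 : ∫ w in (0:ℝ)..1, w ^ a * (1 - w) ^ 0 * (-Real.log w)
        = ∫ w in (0:ℝ)..1, w ^ a * (-Real.log w) := by
      congr 1; funext w; ring
    rw [h1, base_integral a]
    rw [Nat.add_zero, H_succ, Nat.factorial_succ]
    push_cast
    field_simp
    ring
  | succ b ih =>
    intro a
    have hsplit : (fun w : ℝ => w ^ a * (1 - w) ^ (b + 1) * (-Real.log w))
        = fun w : ℝ => w ^ a * (1 - w) ^ b * (-Real.log w)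
            - w ^ (a + 1) * (1 - w) ^ b * (-Real.log w) := by
      funext w; ring
    rw [hsplit, intervalIntegral.integral_sub (integrable_aux a b) (integrable_aux (a + 1) b),
      ih a, ih (a + 1)]
    have e1 : a + 1 + b + 1 = a + b + 2 := by omega
    have e2 : a + (b + 1) + 1 = a + b + 2 := by omega
    rw [e1, e2]
    have h2 : H (a + b + 2) = H (a + b + 1) + 1 / ((a : ℝ) + b + 2) := by
      have := H_succ (a + b + 1); rw [this]; push_cast; ring_nf
    have h3 : H (a + 1) = H a + 1 / ((a : ℝ) + 1) := by
      have := H_succ a; rw [this]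
    have f1 : ((a + b + 2).factorial : ℝ) = ((a : ℝ) + b + 2) * (a + b + 1).factorial := by
      rw [show a + b + 2 = (a + b + 1) + 1 by omega, Nat.factorial_succ]; push_cast; ring
    have f2 : (((a + 1).factorial : ℝ)) = ((a : ℝ) + 1) * a.factorial := by
      rw [Nat.factorial_succ]; push_cast; ring
    have f3 : (((b + 1).factorial : ℝ)) = ((b : ℝ) + 1) * b.factorial := by
      rw [Nat.factorial_succ]; push_cast; ring
    have hfa : ((a.factorial : ℝ)) ≠ 0 := Nat.cast_ne_zero.2 a.factorial_ne_zero
    have hfb : ((b.factorial : ℝ)) ≠ 0 := Nat.cast_ne_zero.2 b.factorial_ne_zero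
    have hfab : (((a + b + 1).factorial : ℝ)) ≠ 0 := Nat.cast_ne_zero.2 (a + b + 1).factorial_ne_zero
    have ha1 : ((a : ℝ) + 1) ≠ 0 := by positivity
    have hab2 : ((a : ℝ) + b + 2) ≠ 0 := by positivity
    rw [h2, h3, f1, f2, f3]
    field_simp
    ring

theorem marginal_pmf_harmonic (n y : ℕ) (hn : 0 < n) (hy : y ≤ n) :
    ∫ w in (0:ℝ)..1,
        (n.choose y : ℝ) * w ^ y * (1 - w) ^ (n - y) * (-Real.log w)
      = (H (n + 1) - H y) / ((n : ℝ) + 1) := by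
  have h1 : (fun w : ℝ => (n.choose y : ℝ) * w ^ y * (1 - w) ^ (n - y) * (-Real.log w))
      = fun w : ℝ => (n.choose y : ℝ) * (w ^ y * (1 - w) ^ (n - y) * (-Real.log w)) := by
    funext w; ring
  rw [h1, intervalIntegral.integral_const_mul, G_formula (n - y) y]
  have e : y + (n - y) + 1 = n + 1 := by omega
  rw [e]
  have key : (n.choose y : ℝ) * ((y.factorial : ℝ) * (n - y).factorial) = n.factorial := by
    have h := Nat.choose_mul_factorial_mul_factorial hy
    push_cast [← h]
    ring
  have hfn : ((n.factorial : ℝ)) ≠ 0 := Nat.cast_ne_zero.2 n.factorial_ne_zero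
  have hn1 : ((n : ℝ) + 1) ≠ 0 := by positivity
  have f1 : (((n + 1).factorial : ℝ)) = ((n : ℝ) + 1) * n.factorial := by
    rw [Nat.factorial_succ]; push_cast; ring
  rw [f1]
  field_simp
  linear_combination (H (n + 1) - H y) * key
end

section
/- Let n be a positive integer and y an integer with 0 ≤ y ≤ n. Then (n!/y!) · Σ_{k=0}^{n-y} [(-1)^k / (k! (n-y-k)!)] · 1/(y+1+k)² = (H_{n+1} - H_y)/(n+1), where H_m = Σ_{j=1}^m 1/j is the m-th harmonic number (with H₀ = 0). -/
open Finset

lemma pascal_sum (m : ℕ) (g : ℕ → ℝ) :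
    ∑ k ∈ range (m+2), (-1:ℝ)^k * ((m+1).choose k) * g k
      = ∑ k ∈ range (m+1), (-1:ℝ)^k * (m.choose k) * g k
        - ∑ k ∈ range (m+1), (-1:ℝ)^k * (m.choose k) * g (k+1) := by
  rw [Finset.sum_range_succ' (fun k => (-1:ℝ)^k * ((m+1).choose k) * g k) (m+1)]
  rw [Finset.sum_range_succ' (fun k => (-1:ℝ)^k * (m.choose k) * g k) m]
  simp only [Nat.choose_succ_succ', Nat.choose_zero_right, Nat.cast_add]
  have : ∑ x ∈ range (m+1), (-1:ℝ)^(x+1) * (↑(m.choose x) + ↑(m.choose (x+1))) * g (x+1)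
      = ∑ x ∈ range (m+1), ((-1:ℝ)^(x+1) * (m.choose (x+1)) * g (x+1)
          + (-(1:ℝ)) * ((-1:ℝ)^x * (m.choose x) * g (x+1))) := by
    apply Finset.sum_congr rfl; intro x _; ring
  rw [this, Finset.sum_add_distrib, ← Finset.mul_sum,
    Finset.sum_range_succ (fun x => (-1:ℝ)^(x+1) * (m.choose (x+1)) * g (x+1)) m]
  simp [Nat.choose_succ_self]
  ring

lemma prod_pos' (m : ℕ) (x : ℝ) (hx : 0 < x) : 0 < ∏ j ∈ range (m+1), (x + j) := by
  apply Finset.prod_pos; intro j _; positivity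

lemma prod_split (m : ℕ) (x : ℝ) :
    x * ∏ j ∈ range (m+1), (x + 1 + j) = (∏ j ∈ range (m+1), (x + j)) * (x + m + 1) := by
  have h1 := Finset.prod_range_succ' (fun k => x + (k:ℝ)) (m+1)
  have h2 := Finset.prod_range_succ (fun k => x + (k:ℝ)) (m+1)
  have h3 : ∏ j ∈ range (m+1), (x + ((j:ℝ)+1)) = ∏ j ∈ range (m+1), (x + 1 + j) := by
    apply Finset.prod_congr rfl; intro j _; ring
  push_cast at h1 h2
  rw [h3] at h1
  rw [h1] at h2
  push_cast
  linarith [h2]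

lemma L1 (m : ℕ) : ∀ x : ℝ, 0 < x →
    ∑ k ∈ range (m+1), (-1:ℝ)^k * (m.choose k) * (1/(x+k))
      = (m.factorial : ℝ) / ∏ j ∈ range (m+1), (x+j) := by
  induction m with
  | zero => intro x hx; simp
  | succ m ih =>
    intro x hx
    have key := pascal_sum m (fun k => 1/(x+k))
    have h3 : ∑ k ∈ range (m+1), (-1:ℝ)^k * (m.choose k) * (1/(x+(k+1:ℕ)))
        = ∑ k ∈ range (m+1), (-1:ℝ)^k * (m.choose k) * (1/((x+1)+k)) := by
      apply Finset.sum_congr rfl; intro j _; push_cast; ring_nf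
    rw [h3] at key
    rw [key, ih x hx, ih (x+1) (by linarith)]
    have hp := prod_pos' m x hx
    have hp1 := prod_pos' m (x+1) (by linarith)
    have hsplit := prod_split m x
    have hpm1 := Finset.prod_range_succ (fun k => x + (k:ℝ)) (m+1)
    push_cast at hpm1
    rw [hpm1]
    rw [Nat.factorial_succ]
    push_cast
    have hP1eq : (∏ j ∈ range (m+1), (x+1+(j:ℝ))) = (∏ j ∈ range (m+1), (x+(j:ℝ))) * (x+(m:ℝ)+1) / x := by
      field_simp
      linarith [hsplit]
    rw [hP1eq]
    have hxm : (0:ℝ) < x + m + 1 := by positivity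
    field_simp
    ring

lemma L2 (m : ℕ) : ∀ x : ℝ, 0 < x →
    ∑ k ∈ range (m+1), (-1:ℝ)^k * (m.choose k) * (1/(x+k)^2)
      = (m.factorial : ℝ) * (∑ j ∈ range (m+1), 1/(x+j)) / ∏ j ∈ range (m+1), (x+j) := by
  induction m with
  | zero => intro x hx; simp; field_simp
  | succ m ih =>
    intro x hx
    have key := pascal_sum m (fun k => 1/(x+k)^2)
    have h3 : ∑ k ∈ range (m+1), (-1:ℝ)^k * (m.choose k) * (1/(x+(k+1:ℕ))^2)
        = ∑ k ∈ range (m+1), (-1:ℝ)^k * (m.choose k) * (1/((x+1)+k)^2) := by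
      apply Finset.sum_congr rfl; intro j _; push_cast; ring_nf
    rw [h3] at key
    rw [key, ih x hx, ih (x+1) (by linarith)]
    have hp := prod_pos' m x hx
    have hp1 := prod_pos' m (x+1) (by linarith)
    have hsplit := prod_split m x
    have hpm1 := Finset.prod_range_succ (fun k => x + (k:ℝ)) (m+1)
    push_cast at hpm1
    rw [hpm1, Nat.factorial_succ]
    -- sum relations
    have hs1 := Finset.sum_range_succ (fun k => 1/(x+(k:ℝ))) (m+1)
    push_cast at hs1
    rw [hs1]
    have hA1 : ∑ j ∈ range (m+1), 1/(x+1+(j:ℝ))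
        = (∑ j ∈ range (m+1), 1/(x+(j:ℝ))) + 1/(x+(m:ℝ)+1) - 1/x := by
      have h4 := Finset.sum_range_succ' (fun k => 1/(x+(k:ℝ))) (m+1)
      have h5 : ∑ j ∈ range (m+1), (1/(x+((j:ℝ)+1))) = ∑ j ∈ range (m+1), 1/(x+1+(j:ℝ)) := by
        apply Finset.sum_congr rfl; intro j _; ring_nf
      push_cast at h4
      rw [h5] at h4
      rw [hs1] at h4
      rw [show x + ((m:ℝ)+1) = x + (m:ℝ) + 1 from by ring] at h4
      simp only [one_div] at h4 ⊢
      ring_nf at h4 ⊢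
      linarith [h4]
    rw [hA1]
    have hP1eq : (∏ j ∈ range (m+1), (x+1+(j:ℝ))) = (∏ j ∈ range (m+1), (x+(j:ℝ))) * (x+(m:ℝ)+1) / x := by
      field_simp
      linarith [hsplit]
    rw [hP1eq]
    have hxm : (0:ℝ) < x + m + 1 := by positivity
    push_cast
    field_simp
    ring


lemma fact_prod (y : ℕ) : ∀ m : ℕ, (y.factorial : ℝ) * ∏ j ∈ range (m+1), ((y:ℝ)+1+j)
    = ((y+m+1).factorial : ℝ) := by
  intro m
  induction m with
  | zero => simp [Nat.factorial_succ]; push_cast; ring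
  | succ m ih =>
    rw [Finset.prod_range_succ, ← mul_assoc, ih]
    have h : (y+(m+1)+1).factorial = ((y+m+1)+1) * (y+m+1).factorial := by
      rw [show y+(m+1)+1 = (y+m+1)+1 from by omega, Nat.factorial_succ]
    rw [h]
    push_cast
    ring

lemma harm_diff (y : ℕ) : ∀ m : ℕ, H (y+m+1) - H y = ∑ j ∈ range (m+1), 1/((y:ℝ)+1+j) := by
  intro m
  induction m with
  | zero => simp [H, Finset.sum_range_succ]
  | succ m ih =>
    rw [show y+(m+1)+1 = (y+m+1)+1 from by ring]
    rw [Finset.sum_range_succ, ← ih]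
    have : H ((y+m+1)+1) = H (y+m+1) + 1/((y:ℝ)+m+1+1) := by
      simp only [H, Finset.sum_range_succ]
      push_cast
      ring
    rw [this]
    push_cast
    ring

theorem alternating_sum_eq_harmonic (n y : ℕ) (hn : 0 < n) (hy : y ≤ n) :
    (Nat.factorial n : ℝ) / (Nat.factorial y : ℝ) *
        ∑ k ∈ Finset.range (n - y + 1),
          (-1 : ℝ) ^ k /
              ((Nat.factorial k : ℝ) * (Nat.factorial (n - y - k) : ℝ)) *
            (1 / ((y : ℝ) + 1 + (k : ℝ)) ^ 2)
      = (H (n + 1) - H y) / ((n : ℝ) + 1) := by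
  set m := n - y with hm
  have hn' : n = y + m := by omega
  have hstep : ∑ k ∈ range (m+1),
      (-1:ℝ)^k / ((k.factorial : ℝ) * ((m-k).factorial : ℝ)) * (1/((y:ℝ)+1+(k:ℝ))^2)
      = (1/(m.factorial : ℝ)) * ∑ k ∈ range (m+1),
          (-1:ℝ)^k * (m.choose k) * (1/(((y:ℝ)+1)+k)^2) := by
    rw [Finset.mul_sum]
    apply Finset.sum_congr rfl
    intro k hk
    have hkm : k ≤ m := by simp at hk; omega
    have hcf := Nat.choose_mul_factorial_mul_factorial hkm
    have hcf' : ((m.choose k : ℝ)) * (k.factorial : ℝ) * ((m-k).factorial : ℝ)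
        = (m.factorial : ℝ) := by exact_mod_cast congrArg Nat.cast hcf
    have h1 : (k.factorial : ℝ) ≠ 0 := by positivity
    have h2 : ((m-k).factorial : ℝ) ≠ 0 := by positivity
    have h3 : (m.factorial : ℝ) ≠ 0 := by positivity
    field_simp
    linear_combination (-1:ℝ) * hcf'
  rw [hstep, L2 m ((y:ℝ)+1) (by positivity)]
  have hA : ∑ j ∈ range (m+1), 1/((y:ℝ)+1+(j:ℝ)) = H (n+1) - H y := by
    have h := harm_diff y m
    rw [show y+m+1 = n+1 from by omega] at h
    exact h.symm
  have hP : (y.factorial:ℝ) * ∏ j ∈ range (m+1), ((y:ℝ)+1+(j:ℝ)) = ((n+1).factorial : ℝ) := by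
    have h := fact_prod y m
    rw [show y+m+1 = n+1 from by omega] at h
    exact h
  rw [hA]
  have hfac : (((n+1).factorial : ℕ) : ℝ) = ((n:ℝ)+1) * (n.factorial : ℝ) := by
    rw [Nat.factorial_succ]; push_cast; ring
  have hy0 : (0:ℝ) < (y.factorial : ℝ) := by positivity
  have hPval : (∏ j ∈ range (m+1), ((y:ℝ)+1+(j:ℝ))) = ((n:ℝ)+1) * (n.factorial : ℝ) / (y.factorial : ℝ) := by
    rw [eq_div_iff hy0.ne']
    rw [← hfac]
    linarith [hP]
  rw [hPval]
  have hm0 : (0:ℝ) < (m.factorial : ℝ) := by positivity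
  have hn0 : (0:ℝ) < (n.factorial : ℝ) := by positivity
  have hn1 : (0:ℝ) < (n:ℝ) + 1 := by positivity
  field_simp
end

section
/- Let n be a positive integer and y an integer with 0 ≤ y ≤ n. For every p₂ ∈ (0,1), ∫₀¹ p₁^y (1 - p₁ p₂)^{n-y} dp₁ = y! (n-y)! Σ_{k=0}^{n-y} p₂^{k} (1-p₂)^{n-y-k} / ((n-y-k)! (y+k+1)!). -/
open intervalIntegral Finset

lemma beta_nat_integral (a b : ℕ) :
    ∫ x in (0:ℝ)..1, x ^ a * (1 - x) ^ b
      = (Nat.factorial a : ℝ) * (Nat.factorial b : ℝ) / (Nat.factorial (a + b + 1) : ℝ) := by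
  induction b generalizing a with
  | zero =>
      simp [integral_pow, Nat.factorial_succ]
      have h : (Nat.factorial a : ℝ) ≠ 0 := by exact_mod_cast a.factorial_ne_zero
      field_simp
  | succ b ih =>
      have hu : ∀ x ∈ Set.uIcc (0:ℝ) 1,
          HasDerivAt (fun x : ℝ => (1 - x) ^ (b + 1))
            (-(((b:ℝ) + 1) * (1 - x) ^ b)) x := by
        intro x _
        have h1 : HasDerivAt (fun x : ℝ => 1 - x) (-1) x := (hasDerivAt_id x).const_sub 1
        have := h1.pow (b + 1)
        exact this.congr_deriv (by push_cast; ring)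
      have hv : ∀ x ∈ Set.uIcc (0:ℝ) 1,
          HasDerivAt (fun x : ℝ => x ^ (a + 1) / ((a:ℝ) + 1)) (x ^ a) x := by
        intro x _
        have := (hasDerivAt_pow (a + 1) x).div_const ((a:ℝ) + 1)
        simpa using this.congr_deriv (by
          push_cast
          field_simp)
      have hInt1 : IntervalIntegrable (fun x : ℝ => -(((b:ℝ) + 1) * (1 - x) ^ b))
          MeasureTheory.volume 0 1 := (by fun_prop : Continuous _).intervalIntegrable 0 1
      have hInt2 : IntervalIntegrable (fun x : ℝ => x ^ a)
          MeasureTheory.volume 0 1 := (by fun_prop : Continuous _).intervalIntegrable 0 1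
      have ibp := integral_mul_deriv_eq_deriv_mul hu hv hInt1 hInt2
      have : (∫ x in (0:ℝ)..1, (1 - x) ^ (b + 1) * x ^ a)
          = ((b:ℝ) + 1) / ((a:ℝ) + 1) * ∫ x in (0:ℝ)..1, x ^ (a + 1) * (1 - x) ^ b := by
        have step : (∫ x in (0:ℝ)..1, -(((b:ℝ)+1)*(1-x)^b) * (x^(a+1)/((a:ℝ)+1)))
            = -(((b:ℝ)+1)/((a:ℝ)+1) * ∫ x in (0:ℝ)..1, x^(a+1)*(1-x)^b) := by
          rw [← intervalIntegral.integral_const_mul, ← intervalIntegral.integral_neg]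
          refine intervalIntegral.integral_congr fun x _ => ?_
          ring
        rw [ibp, step]
        norm_num
      have goal1 : (∫ x in (0:ℝ)..1, x ^ a * (1 - x) ^ (b + 1))
          = ((b:ℝ) + 1) / ((a:ℝ) + 1) * ∫ x in (0:ℝ)..1, x ^ (a + 1) * (1 - x) ^ b := by
        rw [← this]; congr 1; ext x; ring
      rw [goal1, ih (a + 1)]
      have h1 : (Nat.factorial (a + 1) : ℝ) = ((a:ℝ) + 1) * (Nat.factorial a : ℝ) := by
        rw [Nat.factorial_succ]; push_cast; ring
      have h2 : (Nat.factorial (b + 1) : ℝ) = ((b:ℝ) + 1) * (Nat.factorial b : ℝ) := by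
        rw [Nat.factorial_succ]; push_cast; ring
      have h3 : a + 1 + b + 1 = a + (b + 1) + 1 := by ring
      rw [h3] at *
      rw [h1, h2]
      have ha : ((a:ℝ) + 1) ≠ 0 := by positivity
      have hf : (Nat.factorial (a + (b + 1) + 1) : ℝ) ≠ 0 := by
        exact_mod_cast Nat.factorial_ne_zero _
      field_simp

theorem conditional_normalization_const (n y : ℕ) (hn : 0 < n) (hy : y ≤ n)
    (p2 : ℝ) (hp2 : p2 ∈ Set.Ioo (0:ℝ) 1) :
    ∫ p1 in (0:ℝ)..1, p1 ^ y * (1 - p1 * p2) ^ (n - y)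
      = (Nat.factorial y : ℝ) * (Nat.factorial (n - y) : ℝ) *
          ∑ k ∈ Finset.range (n - y + 1),
            p2 ^ k * (1 - p2) ^ (n - y - k) /
              ((Nat.factorial (n - y - k) : ℝ) * (Nat.factorial (y + k + 1) : ℝ)) := by
  set m := n - y with hm
  have key : ∀ p1 : ℝ, p1 ^ y * (1 - p1 * p2) ^ m
      = ∑ k ∈ Finset.range (m + 1),
          (m.choose k : ℝ) * p2 ^ k * (1 - p2) ^ (m - k) * (p1 ^ y * (1 - p1) ^ k) := by
    intro p1
    rw [show (1 : ℝ) - p1 * p2 = p2 * (1 - p1) + (1 - p2) by ring, add_pow, Finset.mul_sum]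
    refine Finset.sum_congr rfl fun k hk => ?_
    rw [mul_pow]
    ring
  simp_rw [key]
  rw [intervalIntegral.integral_finset_sum (fun k _ =>
    ((by fun_prop : Continuous fun p1 : ℝ =>
      (m.choose k : ℝ) * p2 ^ k * (1 - p2) ^ (m - k) * (p1 ^ y * (1 - p1) ^ k)).intervalIntegrable 0 1))]
  simp_rw [intervalIntegral.integral_const_mul, beta_nat_integral]
  rw [Finset.mul_sum]
  refine Finset.sum_congr rfl fun k hk => ?_
  have hk' : k ≤ m := Nat.lt_succ_iff.mp (Finset.mem_range.mp hk)
  have hid := Nat.choose_mul_factorial_mul_factorial hk'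
  have hid' : ((m.choose k : ℕ) : ℝ) * (Nat.factorial k : ℝ) * (Nat.factorial (m - k) : ℝ)
      = (Nat.factorial m : ℝ) := by
    exact_mod_cast hid
  have h1 : (Nat.factorial (m - k) : ℝ) ≠ 0 := by exact_mod_cast Nat.factorial_ne_zero _
  have h2 : (Nat.factorial (y + k + 1) : ℝ) ≠ 0 := by exact_mod_cast Nat.factorial_ne_zero _
  field_simp
  linear_combination (p2 ^ k * (1 - p2) ^ (m - k)) * hid'
end

section
/- Let n be a positive integer and y an integer with 0 ≤ y ≤ n. For every p₂ ∈ (0,1), the marginal posterior density of p₂ given Y = y satisfies π(p₂ | y) = ∫₀¹ C(n,y)(p₁p₂)^y (1-p₁p₂)^{n-y} dp₁ / p(y) = Σ_{k=0}^{n-y} w_k · f_{k+y+1, n-y-k+1}(p₂), where p(y) = ∫₀¹∫₀¹ C(n,y)(p₁p₂)^y(1-p₁p₂)^{n-y} dp₁ dp₂, f_{a,b}(z) = z^{a-1}(1-z)^{b-1} Γ(a+b)/(Γ(a)Γ(b)) is the Beta(a,b) density, and the weights are w_k = 1/((k+y+1)(H_{n+1}-H_y)) for k = 0, ..., n-y,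 which are nonnegative and sum to 1. -/
/-- The mixture weights `w_k = 1/((k+y+1)(H_{n+1}-H_y))`. -/
noncomputable def w (n y k : ℕ) : ℝ := 1 / (((k : ℝ) + y + 1) * (H (n + 1) - H y))

/-- The Beta(a, b) density `f_{a,b}(z) = z^{a-1} (1-z)^{b-1} Γ(a+b)/(Γ(a)Γ(b))`. -/
noncomputable def betaDensity (a b : ℝ) (z : ℝ) : ℝ :=
  z ^ (a - 1) * (1 - z) ^ (b - 1) * Real.Gamma (a + b) / (Real.Gamma a * Real.Gamma b)

open Finset

private lemma one_sub_pow_exp (m : ℕ) (t : ℝ) :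
    (1 - t)^m = ∑ k ∈ range (m+1), (m.choose k : ℝ) * (-1)^k * t^k := by
  rw [sub_eq_add_neg, add_comm, add_pow]
  refine Finset.sum_congr rfl fun k hk => ?_
  ring

private lemma Arec (y m : ℕ) (x : ℝ) :
    ∑ k ∈ range (m+2), ((m+1).choose k : ℝ) * (-1)^k * x^k / ((y:ℝ)+k+1)
  = (1-x)^(m+1) / ((y:ℝ)+1)
    + ((m:ℝ)+1) * x / ((y:ℝ)+1) *
      ∑ k ∈ range (m+1), (m.choose k : ℝ) * (-1)^k * x^k / ((y:ℝ)+1+k+1) := by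
  have hy1 : ((y:ℝ)+1) ≠ 0 := by positivity
  rw [one_sub_pow_exp, Finset.sum_div, Finset.mul_sum]
  rw [Finset.sum_range_succ' (fun k => ((m+1).choose k : ℝ) * (-1)^k * x^k / ((y:ℝ)+k+1)) (m+1)]
  rw [Finset.sum_range_succ' (fun k => ((m+1).choose k : ℝ) * (-1)^k * x^k / ((y:ℝ)+1)) (m+1)]
  conv_rhs => rw [add_right_comm]
  rw [← Finset.sum_add_distrib]
  have h0 : (((m+1).choose 0 : ℝ) * (-1)^0 * x^0 / ((y:ℝ)+(0:ℕ)+1))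
      = ((m+1).choose 0 : ℝ) * (-1)^0 * x^0 / ((y:ℝ)+1) := by norm_num
  refine congr_arg₂ (· + ·) ?_ (by push_cast; norm_num)
  · refine Finset.sum_congr rfl fun k hk => ?_
    have h : ((m:ℝ)+1) * (m.choose k : ℝ) = ((m+1).choose (k+1) : ℝ) * ((k:ℝ)+1) := by
      exact_mod_cast Nat.add_one_mul_choose_eq m k
    have hyk : ((y:ℝ)+((k:ℕ)+1:ℕ)+1) ≠ 0 := by positivity
    have hm1 : ((m:ℝ)+1) ≠ 0 := by positivity
    have hc : (m.choose k : ℝ) = ((m+1).choose (k+1) : ℝ) * ((k:ℝ)+1) / ((m:ℝ)+1) := by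
      field_simp [← h]
      linarith [h]
    push_cast
    have hyk2 : ((y:ℝ)+k+2) ≠ 0 := by positivity
    push_cast at hc
    rw [hc]
    field_simp
    ring

private lemma star : ∀ (m : ℕ) (y : ℕ) (x : ℝ),
    ((y:ℝ)+m+1) * ((y+m).choose y : ℝ) *
      ∑ k ∈ range (m+1), (m.choose k : ℝ) * (-1)^k * x^k / ((y:ℝ)+k+1)
    = ∑ k ∈ range (m+1), (((y+m+1).choose (y+1+k) : ℝ)) * x^k * (1-x)^(m-k) := by
  intro m
  induction m with
  | zero =>
    intro y x
    have hy1 : ((y:ℝ)+1) ≠ 0 := by positivity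
    simp [Nat.choose_self]
    field_simp
  | succ m ih =>
    intro y x
    rw [show m + 1 + 1 = m + 2 from rfl, Arec]
    rw [Finset.sum_range_succ' (fun k => (((y+(m+1)+1).choose (y+1+k) : ℝ)) * x^k * (1-x)^(m+1-k)) (m+1)]
    have key := ih (y+1) x
    -- coefficient facts
    have h1 : ((y:ℝ)+1) * ((y+1+m).choose (y+1) : ℝ) = ((m:ℝ)+1) * ((y+m+1).choose y : ℝ) := by
      have := Nat.choose_succ_right_eq (y+m+1) y
      have h2 : (y+m+1) - y = m+1 := by omega
      rw [h2] at this
      have : ((y+m+1).choose (y+1) : ℝ) * ((y:ℝ)+1) = ((y+m+1).choose y : ℝ) * ((m:ℝ)+1) := by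
        exact_mod_cast this
      rw [show y+1+m = y+m+1 by omega]
      linarith [this]
    have hcast : ((y:ℝ)+(m:ℝ)+2) * ((y+m+1).choose y : ℝ) = ((y+m+2).choose (y+1) : ℝ) * ((y:ℝ)+1) := by
      have := Nat.add_one_mul_choose_eq (y+m+1) y
      exact_mod_cast this
    have hy1 : ((y:ℝ)+1) ≠ 0 := by positivity
    have hS : (∑ k ∈ range (m+1), (fun k => (((y+(m+1)+1).choose (y+1+k) : ℝ)) * x^k * (1-x)^(m+1-k)) (k+1))
        = x * ∑ k ∈ range (m+1), (((y+1+m+1).choose (y+1+1+k) : ℝ)) * x^k * (1-x)^(m-k) := by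
      rw [Finset.mul_sum]
      refine Finset.sum_congr rfl fun k hk => ?_
      simp only
      rw [show y+(m+1)+1 = y+1+m+1 by omega, show y+1+(k+1) = y+1+1+k by omega,
        show m+1-(k+1) = m-k by omega]
      ring
    rw [hS, ← key]
    push_cast at h1 ⊢
    rw [show y+(m+1) = y+m+1 by omega, show y+m+1+1 = y+m+2 by omega,
      show y+1+0 = y+1 by omega, pow_zero, mul_one]
    set S := ∑ k ∈ range (m+1), (m.choose k : ℝ) * (-1)^k * x^k / ((y:ℝ)+1+(k:ℝ)+1) with hSdef
    set P := (1-x)^(m+1) with hPdef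
    field_simp
    linear_combination P * hcast - x * S * ((y:ℝ)+(m:ℝ)+2) * h1

private lemma inner_int (n y : ℕ) (p2 : ℝ) :
    (∫ p1 in (0:ℝ)..1, (n.choose y : ℝ) * (p1 * p2) ^ y * (1 - p1 * p2) ^ (n - y))
    = ∑ k ∈ range (n-y+1),
        (n.choose y : ℝ) * ((n-y).choose k : ℝ) * (-1)^k * p2^(y+k) / ((y:ℝ)+(k:ℝ)+1) := by
  have hpt : ∀ p1 : ℝ, (n.choose y : ℝ) * (p1*p2)^y * (1-p1*p2)^(n-y)
      = ∑ k ∈ range (n-y+1),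
          ((n.choose y : ℝ) * (((n-y).choose k : ℝ)) * (-1)^k * p2^(y+k)) * p1^(y+k) := by
    intro p1
    rw [one_sub_pow_exp (n-y) (p1*p2), Finset.mul_sum]
    refine Finset.sum_congr rfl fun k hk => ?_
    rw [mul_pow, mul_pow, pow_add, pow_add]; ring
  simp only [hpt]
  rw [intervalIntegral.integral_finset_sum (fun i _ =>
    (Continuous.intervalIntegrable (by fun_prop) _ _))]
  refine Finset.sum_congr rfl fun k hk => ?_
  rw [intervalIntegral.integral_const_mul, integral_pow]
  push_cast
  rw [one_pow, zero_pow (by positivity)]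
  ring

private lemma inner_rep (n y : ℕ) (hy : y ≤ n) (q : ℝ) :
    (∫ p1 in (0:ℝ)..1, (n.choose y : ℝ) * (p1 * q) ^ y * (1 - p1 * q) ^ (n - y))
    = q^y / ((n:ℝ)+1) * ∑ k ∈ range (n-y+1),
        ((n+1).choose (y+1+k) : ℝ) * q^k * (1-q)^(n-y-k) := by
  have hn1 : ((n:ℝ)+1) ≠ 0 := by positivity
  have hst := star (n-y) y q
  rw [show y + (n-y) = n by omega] at hst
  rw [show ((y:ℝ) + ((n:ℕ)-(y:ℕ) : ℕ) + 1) = (n:ℝ)+1 by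
    rw [Nat.cast_sub hy]; ring] at hst
  rw [inner_int]
  calc ∑ k ∈ range (n-y+1),
        (n.choose y : ℝ) * ((n-y).choose k : ℝ) * (-1)^k * q^(y+k) / ((y:ℝ)+(k:ℝ)+1)
      = q^y * (n.choose y : ℝ) * ∑ k ∈ range (n-y+1),
          ((n-y).choose k : ℝ) * (-1)^k * q^k / ((y:ℝ)+(k:ℝ)+1) := by
        rw [Finset.mul_sum]
        refine Finset.sum_congr rfl fun k hk => ?_
        rw [pow_add]; ring
    _ = q^y / ((n:ℝ)+1) * (((n:ℝ)+1) * (n.choose y : ℝ) * ∑ k ∈ range (n-y+1),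
          ((n-y).choose k : ℝ) * (-1)^k * q^k / ((y:ℝ)+(k:ℝ)+1)) := by
        field_simp
    _ = q^y / ((n:ℝ)+1) * ∑ k ∈ range (n-y+1),
          ((n+1).choose (y+1+k) : ℝ) * q^k * (1-q)^(n-y-k) := by rw [hst]

private lemma int_exp (a b : ℕ) :
    (∫ q in (0:ℝ)..1, q^a * (1-q)^b)
    = ∑ k ∈ range (b+1), (b.choose k : ℝ) * (-1)^k / ((a:ℝ)+(k:ℝ)+1) := by
  have hpt : ∀ q : ℝ, q^a * (1-q)^b
      = ∑ k ∈ range (b+1), ((b.choose k : ℝ) * (-1)^k) * q^(a+k) := by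
    intro q
    rw [one_sub_pow_exp b q, Finset.mul_sum]
    refine Finset.sum_congr rfl fun k hk => ?_
    rw [pow_add]; ring
  simp only [hpt]
  rw [intervalIntegral.integral_finset_sum (fun i _ =>
    (Continuous.intervalIntegrable (by fun_prop) _ _))]
  refine Finset.sum_congr rfl fun k hk => ?_
  rw [intervalIntegral.integral_const_mul, integral_pow]
  push_cast
  rw [one_pow, zero_pow (by positivity)]
  ring

private lemma beta_int (a b : ℕ) :
    (∫ q in (0:ℝ)..1, q^a * (1-q)^b)
    = 1 / ((((a:ℝ)+b+1)) * ((a+b).choose a : ℝ)) := by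
  have hst := star b a 1
  have hrhs : ∑ k ∈ range (b+1), ((a+b+1).choose (a+1+k) : ℝ) * (1:ℝ)^k * (1-1:ℝ)^(b-k) = 1 := by
    rw [Finset.sum_range_succ, Finset.sum_eq_zero fun k hk => by
      rw [show (1:ℝ)-(1:ℝ) = 0 by ring, zero_pow (by simp at hk; omega)]; ring]
    rw [show a+1+b = a+b+1 by omega, Nat.choose_self]
    norm_num
  rw [hrhs] at hst
  have hc : (0:ℝ) < ((a+b).choose a : ℝ) := by
    exact_mod_cast Nat.choose_pos (Nat.le_add_right a b)
  have hab : ((a:ℝ)+b+1) ≠ 0 := by positivity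
  rw [int_exp]
  have : ∑ k ∈ range (b+1), (b.choose k : ℝ) * (-1)^k / ((a:ℝ)+(k:ℝ)+1)
      = ∑ k ∈ range (b+1), (b.choose k : ℝ) * (-1)^k * (1:ℝ)^k / ((a:ℝ)+(k:ℝ)+1) := by
    refine Finset.sum_congr rfl fun k hk => by ring
  rw [this]
  field_simp at hst ⊢
  linarith [hst]

private lemma Hdiff (n y : ℕ) (hy : y ≤ n) :
    H (n+1) - H y = ∑ k ∈ range (n-y+1), 1 / ((y:ℝ)+(k:ℝ)+1) := by
  unfold H
  rw [show n+1 = y + (n-y+1) by omega, Finset.sum_range_add]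
  simp only [add_sub_cancel_left]
  refine Finset.sum_congr rfl fun k hk => ?_
  push_cast; ring

private lemma denom_eq (n y : ℕ) (hy : y ≤ n) :
    (∫ q2 in (0:ℝ)..1, ∫ p1 in (0:ℝ)..1,
        (n.choose y : ℝ) * (p1 * q2) ^ y * (1 - p1 * q2) ^ (n - y))
    = (H (n+1) - H y) / ((n:ℝ)+1) := by
  have hn1 : ((n:ℝ)+1) ≠ 0 := by positivity
  simp only [inner_rep n y hy]
  have hpt : ∀ q : ℝ, q^y / ((n:ℝ)+1) * ∑ k ∈ range (n-y+1),
        ((n+1).choose (y+1+k) : ℝ) * q^k * (1-q)^(n-y-k)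
      = ∑ k ∈ range (n-y+1),
        (((n+1).choose (y+1+k) : ℝ) / ((n:ℝ)+1)) * (q^(y+k) * (1-q)^(n-y-k)) := by
    intro q
    rw [div_mul_eq_mul_div, Finset.mul_sum, Finset.sum_div]
    refine Finset.sum_congr rfl fun k hk => ?_
    rw [pow_add]; ring
  simp only [hpt]
  rw [intervalIntegral.integral_finset_sum (fun i _ =>
    (Continuous.intervalIntegrable (by fun_prop) _ _))]
  rw [Hdiff n y hy, Finset.sum_div]
  refine Finset.sum_congr rfl fun k hk => ?_
  have hk' : k ≤ n - y := by simp at hk; omega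
  rw [intervalIntegral.integral_const_mul, beta_int (y+k) (n-y-k)]
  have hcast1 : ((y+k : ℕ):ℝ) + ((n-y-k : ℕ):ℝ) + 1 = (n:ℝ)+1 := by
    rw [← Nat.cast_add, show (y+k)+(n-y-k) = n by omega]
  rw [hcast1, show (y+k)+(n-y-k) = n by omega]
  have hmc : ((n:ℝ)+1) * (n.choose (y+k) : ℝ) = ((n+1).choose (y+k+1) : ℝ) * ((y:ℝ)+(k:ℝ)+1) := by
    have := Nat.add_one_mul_choose_eq n (y+k)
    push_cast at this ⊢
    exact_mod_cast this
  rw [hmc, show y+1+k = y+k+1 by omega]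
  have hC1 : (0:ℝ) < (((n+1)).choose (y+k+1) : ℝ) := by
    exact_mod_cast Nat.choose_pos (by omega : y+k+1 ≤ n+1)
  have hyk : ((y:ℝ)+(k:ℝ)+1) ≠ 0 := by positivity
  field_simp

theorem posterior_density_beta_mixture (n y : ℕ) (hn : 0 < n) (hy : y ≤ n)
    (p2 : ℝ) (hp2 : p2 ∈ Set.Ioo (0:ℝ) 1) :
    (∀ k ∈ Finset.range (n - y + 1), 0 ≤ w n y k) ∧
    (∑ k ∈ Finset.range (n - y + 1), w n y k = 1) ∧
    (∫ p1 in (0:ℝ)..1, (n.choose y : ℝ) * (p1 * p2) ^ y * (1 - p1 * p2) ^ (n - y)) /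
        (∫ q2 in (0:ℝ)..1, ∫ p1 in (0:ℝ)..1,
            (n.choose y : ℝ) * (p1 * q2) ^ y * (1 - p1 * q2) ^ (n - y))
      = ∑ k ∈ Finset.range (n - y + 1),
          w n y k * betaDensity ((k : ℝ) + y + 1) ((n : ℝ) - y - k + 1) p2 := by
  have hn1 : ((n:ℝ)+1) ≠ 0 := by positivity
  have hΔpos : 0 < H (n+1) - H y := by
    rw [Hdiff n y hy]
    refine Finset.sum_pos (fun k hk => by positivity) ⟨0, by simp⟩
  have hΔ : H (n+1) - H y ≠ 0 := ne_of_gt hΔpos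
  refine ⟨fun k hk => ?_, ?_, ?_⟩
  · unfold w
    positivity
  · have : ∀ k ∈ Finset.range (n-y+1), w n y k = (1 / ((y:ℝ)+(k:ℝ)+1)) / (H (n+1) - H y) := by
      intro k hk
      unfold w
      rw [← div_div]
      ring_nf
    rw [Finset.sum_congr rfl this, ← Finset.sum_div, ← Hdiff n y hy, div_self hΔ]
  · rw [inner_rep n y hy p2, denom_eq n y hy]
    have hL : (p2^y/((n:ℝ)+1) * ∑ k ∈ range (n-y+1),
          ((n+1).choose (y+1+k) : ℝ) * p2^k * (1-p2)^(n-y-k)) / ((H (n+1) - H y)/((n:ℝ)+1))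
        = ∑ k ∈ range (n-y+1),
            p2^y * (((n+1).choose (y+1+k) : ℝ) * p2^k * (1-p2)^(n-y-k)) / (H (n+1) - H y) := by
      rw [div_div_eq_mul_div, show p2^y/((n:ℝ)+1) * (∑ k ∈ range (n-y+1),
          ((n+1).choose (y+1+k) : ℝ) * p2^k * (1-p2)^(n-y-k)) * ((n:ℝ)+1)
        = p2^y * ∑ k ∈ range (n-y+1),
          ((n+1).choose (y+1+k) : ℝ) * p2^k * (1-p2)^(n-y-k) by field_simp,
        Finset.mul_sum, Finset.sum_div]
    rw [hL]
    refine Finset.sum_congr rfl fun k hk => ?_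
    have hk' : k ≤ n - y := by simp at hk; omega
    unfold w betaDensity
    rw [show (k:ℝ)+(y:ℝ)+1-1 = ((k+y:ℕ):ℝ) by push_cast; ring, Real.rpow_natCast,
      show (n:ℝ)-(y:ℝ)-(k:ℝ)+1-1 = ((n-y-k:ℕ):ℝ) by
        rw [Nat.cast_sub hk', Nat.cast_sub hy]; try ring,
      Real.rpow_natCast,
      show (k:ℝ)+(y:ℝ)+1+((n:ℝ)-(y:ℝ)-(k:ℝ)+1) = ((n+1:ℕ):ℝ)+1 by push_cast; ring,
      Real.Gamma_nat_eq_factorial,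
      show (k:ℝ)+(y:ℝ)+1 = ((k+y:ℕ):ℝ)+1 by push_cast; ring,
      Real.Gamma_nat_eq_factorial,
      show (n:ℝ)-(y:ℝ)-(k:ℝ)+1 = ((n-y-k:ℕ):ℝ)+1 by
        rw [Nat.cast_sub hk', Nat.cast_sub hy]; try ring,
      Real.Gamma_nat_eq_factorial]
    rw [Nat.cast_choose ℝ (show y+1+k ≤ n+1 by omega)]
    rw [show (n+1)-(y+1+k) = n-y-k by omega]
    rw [show y+1+k = (k+y)+1 by omega]
    rw [show (k+y+1).factorial = (k+y+1) * (k+y).factorial from Nat.factorial_succ (k+y)]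
    have hf1 : (0:ℝ) < ((k+y).factorial : ℝ) := by exact_mod_cast (k+y).factorial_pos
    have hf2 : (0:ℝ) < ((n-y-k).factorial : ℝ) := by exact_mod_cast (n-y-k).factorial_pos
    have hky : (((k+y:ℕ)):ℝ) + 1 ≠ 0 := by positivity
    push_cast
    field_simp
    ring
end

section
/- Fix α ∈ (0,1). With E(p₂ | Y = y) = (n-y+1)/((n+2)(H_{n+1} - H_y)) denoting the posterior expectation of p₂ given Y = y in the model with sample size n, one has lim_{n→∞} E(p₂ | Y = ⌊αn⌋) = (1-α)/(-ln α). -/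
lemma div_div_div_same (N M n : ℝ) (hn : n ≠ 0) : (N/n)/(M/n) = N/M := by
  rw [div_div_div_comm, div_self hn, div_one]

lemma H_eq_harmonic (m : ℕ) : H m = (harmonic m : ℝ) := by
  simp only [H, harmonic]
  push_cast
  simp [one_div]

theorem posterior_expectation_limit (a : ℝ) (ha : a ∈ Set.Ioo (0:ℝ) 1) :
    Filter.Tendsto
      (fun n : ℕ =>
        ((n : ℝ) - (⌊a * n⌋₊ : ℝ) + 1) /
          (((n : ℝ) + 2) * (H (n + 1) - H ⌊a * n⌋₊)))
      Filter.atTop (nhds ((1 - a) / (-Real.log a))) := by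
  obtain ⟨ha0, ha1⟩ := ha
  set k : ℕ → ℕ := fun n => ⌊a * n⌋₊ with hkdef
  -- k n / n → a
  have hk : Filter.Tendsto (fun n : ℕ => (k n : ℝ) / n) Filter.atTop (nhds a) :=
    (tendsto_nat_floor_mul_div_atTop ha0.le).comp tendsto_natCast_atTop_atTop
  -- k n → ∞
  have hkt : Filter.Tendsto k Filter.atTop Filter.atTop :=
    tendsto_nat_floor_atTop.comp
      (Filter.Tendsto.const_mul_atTop ha0 tendsto_natCast_atTop_atTop)
  -- harmonic difference limit
  have hγ := Real.tendsto_harmonic_sub_log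
  have hγ1 : Filter.Tendsto (fun n : ℕ => (harmonic (n+1) : ℝ) - Real.log (n+1))
      Filter.atTop (nhds Real.eulerMascheroniConstant) := by
    have := hγ.comp (Filter.tendsto_add_atTop_nat 1)
    apply this.congr
    intro n
    simp only [Function.comp]
    push_cast
    ring
  have hγ2 : Filter.Tendsto (fun n : ℕ => (harmonic (k n) : ℝ) - Real.log (k n))
      Filter.atTop (nhds Real.eulerMascheroniConstant) := hγ.comp hkt
  -- ratio (n+1)/(k n) → 1/a
  have hn1 : Filter.Tendsto (fun n : ℕ => ((n : ℝ) + 1) / n) Filter.atTop (nhds 1) := by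
    have h : Filter.Tendsto (fun n : ℕ => 1 + 1 / (n : ℝ)) Filter.atTop (nhds (1 + 0)) :=
      tendsto_const_nhds.add tendsto_one_div_atTop_nhds_zero_nat
    rw [add_zero] at h
    apply h.congr'
    filter_upwards [Filter.eventually_gt_atTop 0] with n hn
    have hne : (n : ℝ) ≠ 0 := Nat.cast_ne_zero.mpr hn.ne'
    field_simp
  have hratio : Filter.Tendsto (fun n : ℕ => ((n : ℝ) + 1) / (k n)) Filter.atTop
      (nhds (1 / a)) := by
    have := hn1.div hk ha0.ne'
    apply this.congr'
    filter_upwards [Filter.eventually_gt_atTop 0] with n hn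
    have hne : (n : ℝ) ≠ 0 := Nat.cast_ne_zero.mpr hn.ne'
    simp only [Pi.div_apply]
    rw [div_div_div_same _ _ _ hne]
  have hlograt : Filter.Tendsto (fun n : ℕ => Real.log (((n : ℝ) + 1) / (k n)))
      Filter.atTop (nhds (-Real.log a)) := by
    have := hratio.log (by positivity : (1:ℝ)/a ≠ 0)
    simpa [Real.log_div one_ne_zero ha0.ne'] using this
  -- H (n+1) - H (k n) → - log a
  have hD : Filter.Tendsto (fun n : ℕ => H (n+1) - H (k n)) Filter.atTop
      (nhds (-Real.log a)) := by
    have hcomb := (hγ1.sub hγ2).add hlograt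
    rw [sub_self, zero_add] at hcomb
    apply hcomb.congr'
    filter_upwards [hkt.eventually_gt_atTop 0] with n hkn
    have hkne : (0:ℝ) < (k n : ℝ) := by exact_mod_cast hkn
    have hnpos : (0:ℝ) < (n : ℝ) + 1 := by positivity
    rw [Real.log_div hnpos.ne' hkne.ne']
    simp only [H_eq_harmonic]
    ring
  -- final assembly
  have hnum : Filter.Tendsto (fun n : ℕ => 1 - (k n : ℝ)/n + 1/n) Filter.atTop
      (nhds (1 - a)) := by
    have h1 : Filter.Tendsto (fun _ : ℕ => (1:ℝ)) Filter.atTop (nhds 1) := tendsto_const_nhds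
    have := (h1.sub hk).add tendsto_one_div_atTop_nhds_zero_nat
    simpa using this
  have hden : Filter.Tendsto (fun n : ℕ => (1 + 2/(n:ℝ)) * (H (n+1) - H (k n)))
      Filter.atTop (nhds (-Real.log a)) := by
    have h2 : Filter.Tendsto (fun n : ℕ => 1 + 2/(n:ℝ)) Filter.atTop (nhds 1) := by
      have h1 : Filter.Tendsto (fun _ : ℕ => (1:ℝ)) Filter.atTop (nhds 1) := tendsto_const_nhds
      have := h1.add (tendsto_one_div_atTop_nhds_zero_nat.const_mul (2:ℝ))
      simpa [mul_one_div, div_eq_mul_inv] using this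
    simpa using h2.mul hD
  have hloga : -Real.log a ≠ 0 := by
    have : Real.log a < 0 := Real.log_neg ha0 ha1
    linarith
  have := hnum.div hden hloga
  apply this.congr'
  filter_upwards [Filter.eventually_gt_atTop 0] with n hn
  have hne : (n : ℝ) ≠ 0 := Nat.cast_ne_zero.mpr hn.ne'
  have e1 : 1 - (k n : ℝ)/n + 1/n = ((n : ℝ) - (k n : ℝ) + 1) / n := by
    field_simp
  have e2 : (1 + 2/(n:ℝ)) * (H (n+1) - H (k n))
      = (((n : ℝ) + 2) * (H (n+1) - H (k n))) / n := by
    field_simp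
  simp only [Pi.div_apply]
  rw [e1, e2, div_div_div_same _ _ _ hne]
end
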